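/- If u is a vertex of G with degree at most 1, then mmfvs(G - u) = mmfvs(G). -/

import Mathlib

open SimpleGraph

def IsFVS {V : Type*} (G : SimpleGraph V) (S : Set V) : Prop :=
  (G.induce Sᶜ).IsAcyclic

def IsMinFVS {V : Type*} (G : SimpleGraph V) (S : Set V) : Prop :=
  IsFVS G S ∧ ∀ T : Set V, T ⊂ S → ¬ IsFVS G T

noncomputable def mmfvs {V : Type*} (G : SimpleGraph V) : ℕ :=
  sSup {k | ∃ S : Set V, IsMinFVS G S ∧ S.ncard = k}

namespace MMFVSAux

variable {V : Type*} {G : SimpleGraph V}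

/-- Lift a walk whose support lies in `B` to the induced subgraph on `B`. -/
def liftWalk {B : Set V} : ∀ {v w : V} (p : G.Walk v w), (∀ x ∈ p.support, x ∈ B) →
    ∀ (hv : v ∈ B) (hw : w ∈ B), (G.induce B).Walk ⟨v, hv⟩ ⟨w, hw⟩
  | _, _, .nil, _, _, _ => Walk.nil
  | _, _, .cons h p, hp, hv, hw =>
      Walk.cons (by exact h)
        (liftWalk p (fun x hx => hp x (by simp [hx])) (hp _ (by simp)) hw)

lemma map_liftWalk {B : Set V} : ∀ {v w : V} (p : G.Walk v w) (hp : ∀ x ∈ p.support, x ∈ B)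
    (hv : v ∈ B) (hw : w ∈ B),
    (liftWalk p hp hv hw).map (SimpleGraph.Embedding.induce B).toHom = p
  | _, _, .nil, _, _, _ => rfl
  | _, _, .cons h p, hp, hv, hw => by
      exact congrArg (Walk.cons h) (map_liftWalk p (fun x hx => hp x (by simp [hx])) (hp _ (by simp)) hw)

lemma injective_induce_hom (B : Set V) :
    Function.Injective ((SimpleGraph.Embedding.induce (G := G) B).toHom) :=
  Subtype.val_injective

lemma isAcyclic_induce_iff {B : Set V} :
    (G.induce B).IsAcyclic ↔
      ∀ (v : V) (c : G.Walk v v), c.IsCycle → ¬ (∀ x ∈ c.support, x ∈ B) := by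
  constructor
  · intro h v c hc hsub
    have hv : v ∈ B := hsub v c.start_mem_support
    refine h (liftWalk c hsub hv hv) ?_
    exact (Walk.map_isCycle_iff_of_injective (injective_induce_hom B)).mp
      (by rw [map_liftWalk]; exact hc)
  · intro h v c hc
    refine h ↑v (c.map (SimpleGraph.Embedding.induce B).toHom)
      (hc.map (injective_induce_hom B)) ?_
    intro x hx
    erw [Walk.support_map] at hx
    obtain ⟨y, _, rfl⟩ := List.mem_map.mp hx
    exact y.2

lemma isAcyclic_induce_induce_iff {B : Set V} {C : Set B} :
    ((G.induce B).induce C).IsAcyclic ↔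
      ∀ (v : V) (c : G.Walk v v), c.IsCycle → ¬ (∀ x ∈ c.support, x ∈ Subtype.val '' C) := by
  rw [isAcyclic_induce_iff]
  constructor
  · intro h v c hc hsub
    have hsubB : ∀ x ∈ c.support, x ∈ B := fun x hx => by
      obtain ⟨y, _, rfl⟩ := hsub x hx; exact y.2
    have hv : v ∈ B := hsubB v c.start_mem_support
    refine h ⟨v, hv⟩ (liftWalk c hsubB hv hv)
      ((Walk.map_isCycle_iff_of_injective (injective_induce_hom B)).mp
        (by rw [map_liftWalk]; exact hc)) ?_
    intro x hx
    have hxc : (x : V) ∈ c.support := by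
      rw [← map_liftWalk c hsubB hv hv]; erw [Walk.support_map]
      exact List.mem_map_of_mem hx
    obtain ⟨y, hy, hyx⟩ := hsub _ hxc
    rwa [← Subtype.val_injective hyx]
  · intro h v c hc hsub
    refine h ↑v (c.map (SimpleGraph.Embedding.induce B).toHom)
      (hc.map (injective_induce_hom B)) ?_
    intro x hx
    erw [Walk.support_map] at hx
    obtain ⟨y, hy, rfl⟩ := List.mem_map.mp hx
    exact ⟨y, hsub y hy, rfl⟩

variable [Fintype V] [DecidableEq V]

lemma not_mem_cycle_support {u : V} (hdeg : (G.neighborSet u).ncard ≤ 1) {v : V}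
    {c : G.Walk v v} (hc : c.IsCycle) : u ∉ c.support := by
  intro hu
  have hc' := hc.rotate hu
  set c' := c.rotate u hu with hcdef
  clear_value c'
  cases c' with
  | nil => exact Walk.IsCycle.not_of_nil hc'
  | @cons _ x _ h p =>
    rw [Walk.cons_isCycle_iff] at hc'
    obtain ⟨hpath, hedge⟩ := hc'
    have hpnil : ¬ p.Nil := by
      intro hnil
      rw [Walk.nil_iff_length_eq] at hnil
      exact h.ne' (Walk.eq_of_length_eq_zero hnil)
    have hrnil : ¬ p.reverse.Nil := by
      rwa [Walk.nil_iff_length_eq, Walk.length_reverse, ← Walk.nil_iff_length_eq]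
    have hadj2 : G.Adj u (p.reverse.getVert 1) := p.reverse.adj_snd hrnil
    have hmem : s(u, p.reverse.getVert 1) ∈ p.reverse.edges := by
      rw [← Walk.cons_tail_eq p.reverse hrnil, Walk.edges_cons]
      simp
    have hne : p.reverse.getVert 1 ≠ x := by
      intro heq
      apply hedge
      rw [heq] at hmem
      rwa [Walk.edges_reverse, List.mem_reverse] at hmem
    have h2 : 1 < (G.neighborSet u).ncard := by
      rw [Set.one_lt_ncard_iff (Set.toFinite _)]
      exact ⟨x, p.reverse.getVert 1, h, hadj2, fun e => hne e.symm⟩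
    omega

lemma isAcyclic_insert_iff {u : V} (hdeg : (G.neighborSet u).ncard ≤ 1) (A : Set V) :
    (G.induce (insert u A)).IsAcyclic ↔ (G.induce A).IsAcyclic := by
  rw [isAcyclic_induce_iff, isAcyclic_induce_iff]
  constructor
  · intro h v c hc hsub
    exact h v c hc (fun x hx => Set.mem_insert_of_mem _ (hsub x hx))
  · intro h v c hc hsub
    refine h v c hc (fun x hx => ?_)
    rcases Set.mem_insert_iff.mp (hsub x hx) with rfl | hxA
    · exact absurd hx (not_mem_cycle_support hdeg hc)
    · exact hxA

lemma isFVS_preimage_iff {u : V} (hdeg : (G.neighborSet u).ncard ≤ 1) (S : Set V) :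
    IsFVS (G.induce ({u}ᶜ : Set V)) (Subtype.val ⁻¹' S) ↔ IsFVS G S := by
  unfold IsFVS
  rw [← Set.preimage_compl, isAcyclic_induce_induce_iff, isAcyclic_induce_iff,
    Set.image_preimage_eq_inter_range, Subtype.range_coe]
  constructor
  · intro h v c hc hsub
    refine h v c hc (fun x hx => ⟨hsub x hx, ?_⟩)
    intro hxu
    rw [Set.mem_singleton_iff] at hxu
    subst hxu
    exact (not_mem_cycle_support hdeg hc) hx
  · intro h v c hc hsub
    exact h v c hc (fun x hx => (hsub x hx).1)

lemma not_mem_of_isMinFVS {u : V} (hdeg : (G.neighborSet u).ncard ≤ 1) (S : Set V)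
    (hS : IsMinFVS G S) : u ∉ S := by
  intro huS
  refine hS.2 (S \ {u}) (Set.sdiff_singleton_ssubset.mpr huS) ?_
  unfold IsFVS
  have hcompl : (S \ {u})ᶜ = insert u Sᶜ := by
    rw [Set.diff_eq, Set.compl_inter, compl_compl]
    ext x
    simp [or_comm]
  rw [hcompl, isAcyclic_insert_iff hdeg]
  exact hS.1

end MMFVSAux

open MMFVSAux in
theorem mmfvs_delete_low_degree {V : Type*} [Fintype V] [DecidableEq V]
    (G : SimpleGraph V) (u : V) (hdeg : (G.neighborSet u).ncard ≤ 1) :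
    mmfvs (G.induce ({u}ᶜ : Set V)) = mmfvs G := by
  unfold mmfvs
  congr 1
  ext k
  simp only [Set.mem_setOf_eq]
  constructor
  · rintro ⟨S', ⟨hFVS', hmin'⟩, rfl⟩
    have hpre : (Subtype.val ⁻¹' (Subtype.val '' S') : Set ({u}ᶜ : Set V)) = S' :=
      Set.preimage_image_eq S' Subtype.val_injective
    refine ⟨Subtype.val '' S', ⟨?_, ?_⟩, (Set.ncard_image_of_injective S'
      Subtype.val_injective).symm ▸ rfl⟩
    · rw [← isFVS_preimage_iff hdeg, hpre]
      exact hFVS'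
    · intro T hT hFVST
      have huT : u ∉ T := by
        intro huT
        obtain ⟨z, _, hz⟩ := hT.1 huT
        exact z.2 (Set.mem_singleton_iff.mpr hz)
      have hT' : (Subtype.val ⁻¹' T : Set ({u}ᶜ : Set V)) ⊂ S' := by
        constructor
        · rw [← hpre]
          exact Set.preimage_mono hT.1  -- hT.1 : T ⊆ S'img
        · intro hcon
          -- preimage T ⊇ preimage S'img means ... derive T = image S'
          have : Subtype.val '' S' ⊆ T := by
            rintro y ⟨z, hz, rfl⟩
            exact hcon hz
          exact hT.2 this
      exact hmin' _ hT' ((isFVS_preimage_iff hdeg T).mpr hFVST)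
  · rintro ⟨S, hS, rfl⟩
    have huS : u ∉ S := not_mem_of_isMinFVS hdeg S hS
    have himg : Subtype.val '' (Subtype.val ⁻¹' S : Set ({u}ᶜ : Set V)) = S := by
      rw [Set.image_preimage_eq_inter_range, Subtype.range_coe]
      exact Set.inter_eq_self_of_subset_left (Set.subset_compl_singleton_iff.mpr huS)
    refine ⟨Subtype.val ⁻¹' S, ⟨(isFVS_preimage_iff hdeg S).mpr hS.1, ?_⟩, ?_⟩
    · intro T' hT' hFVST'
      have hTsub : Subtype.val '' T' ⊂ S := by
        constructor
        · rw [← himg]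
          exact Set.image_mono hT'.1
        · intro hcon
          refine hT'.2 ?_
          intro z hz
          obtain ⟨y, hy, hyz⟩ := hcon hz
          rwa [← Subtype.val_injective hyz]
      exact hS.2 _ hTsub ((isFVS_preimage_iff hdeg _).mp
        ((Set.preimage_image_eq T' Subtype.val_injective).symm ▸ hFVST'))
    · conv_rhs => rw [← himg]
      rw [Set.ncard_image_of_injective _ Subtype.val_injective]
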